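/- Let L be a first-order language with no relation symbols, M an L-structure, t and t' two L-terms with variables indexed by Fin m, and σ : Fin m → Fin m an involution (σ ∘ σ = id). Suppose that for every compatible reflexive binary relation R on M and every f : Fin m → M satisfying (R ∘ R˘) (f j) (f (σ j)) for all j, one has (R ∘ R˘) (t.realize f) (t'.realize f). Then for every nest-representable relation Ψ on M and every e : Fin m → M satisfying Ψ (e j) (e (σ j)) for all j, one has Ψ (t.realize e) (t'.realize e). (This is the inductive core of the theorem: the tolerance identity transfers from representable to all nest-representable tolerances.) -/

import Mathlib

open FirstOrder

/-- A binary relation on an `L`-structure is *compatible* if every function symbol's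
interpretation preserves it componentwise. -/
def Compatible (L : Language) {M : Type*} [L.Structure M] (R : M → M → Prop) : Prop :=
  ∀ (n : ℕ) (f : L.Functions n) (a b : Fin n → M),
    (∀ i, R (a i) (b i)) → R (Language.Structure.funMap f a) (Language.Structure.funMap f b)

/-- The set of *nest-representable* relations: the smallest set of binary relations on `M`
containing `R ∘ R˘` for each compatible reflexive `R`, closed under arbitrary intersections,
and closed under `Ψ ↦ R ∘ Ψ ∘ R˘` for compatible reflexive `R`. -/
inductive NestRepresentable (L : Language) {M : Type*} [L.Structure M] : (M → M → Prop) → Prop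
  | repr (R : M → M → Prop) (hc : Compatible L R) (hr : Reflexive R) :
      NestRepresentable L (Relation.Comp R (flip R))
  | inter {K : Type*} (Θ : K → M → M → Prop) (h : ∀ k, NestRepresentable L (Θ k)) :
      NestRepresentable L (fun a b => ∀ k, Θ k a b)
  | comp (Ψ R : M → M → Prop) (hΨ : NestRepresentable L Ψ)
      (hc : Compatible L R) (hr : Reflexive R) :
      NestRepresentable L (Relation.Comp R (Relation.Comp Ψ (flip R)))

theorem nestRepresentable_refl (L : Language) {M : Type*} [L.Structure M]
    {Ψ : M → M → Prop} (h : NestRepresentable L Ψ) : Reflexive Ψ := by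
  induction h with
  | repr R hc hr => exact fun a => ⟨a, hr a, hr a⟩
  | inter Θ h ih => exact fun a k => ih k a
  | comp Ψ R hΨ hc hr ih => exact fun a => ⟨a, hr a, a, ih a, hr a⟩

theorem nestRepresentable_symm (L : Language) {M : Type*} [L.Structure M]
    {Ψ : M → M → Prop} (h : NestRepresentable L Ψ) : Symmetric Ψ := by
  induction h with
  | repr R hc hr => exact fun a b ⟨c, h1, h2⟩ => ⟨c, h2, h1⟩
  | inter Θ h ih => exact fun a b hab k => ih k (hab k)
  | comp Ψ R hΨ hc hr ih =>
    rintro a b ⟨x, hx, y, hxy, hy⟩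
    exact ⟨y, hy, x, ih hxy, hx⟩

theorem compatible_term {L : Language} {M : Type*} [L.Structure M]
    {R : M → M → Prop} (hc : Compatible L R) {α : Type*} (t : L.Term α)
    (a b : α → M) (hab : ∀ i, R (a i) (b i)) : R (t.realize a) (t.realize b) := by
  induction t with
  | var i => exact hab i
  | func f ts ih =>
    simp only [Language.Term.realize]
    exact hc _ f _ _ fun i => ih i

/-- The inductive core of the theorem: a tolerance identity (encoded by the terms `t, t'` and
the pairing involution `σ`) holding for all representable relations `R ∘ R˘` transfers to all
nest-representable relations. -/
theorem transfer_to_nestRepresentable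
    {L : Language} (hL : ∀ n, IsEmpty (L.Relations n))
    {M : Type*} [L.Structure M]
    {m : ℕ} (t t' : L.Term (Fin m)) (σ : Fin m → Fin m) (hσ : σ ∘ σ = id)
    (hrep : ∀ R : M → M → Prop, Compatible L R → Reflexive R →
      ∀ f : Fin m → M, (∀ j, Relation.Comp R (flip R) (f j) (f (σ j))) →
        Relation.Comp R (flip R) (t.realize f) (t'.realize f)) :
    ∀ Ψ : M → M → Prop, NestRepresentable L Ψ →
      ∀ e : Fin m → M, (∀ j, Ψ (e j) (e (σ j))) →
        Ψ (t.realize e) (t'.realize e) := by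
  intro Ψ hΨ
  induction hΨ with
  | repr R hc hr => exact hrep R hc hr
  | inter Θ h ih => exact fun e he k => ih k e fun j => he j k
  | comp Ψ R hΨ hc hr ih =>
    intro e he
    choose u h1 v h2 h3 using he
    set f : Fin m → M := fun j => if j ≤ σ j then u j else v (σ j) with hf
    have hσσ : ∀ j, σ (σ j) = j := fun j => congrFun hσ j
    have hf1 : ∀ j, R (e j) (f j) := by
      intro j
      by_cases hj : j ≤ σ j
      · simpa [hf, hj] using h1 j
      · have := h3 (σ j)
        rw [hσσ] at this
        simpa [hf, hj, flip] using this
    have hf2 : ∀ j, Ψ (f j) (f (σ j)) := by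
      intro j
      rcases lt_trichotomy j (σ j) with h | h | h
      · simpa [hf, le_of_lt h, hσσ, not_le.2 h] using h2 j
      · simpa [hf, ← h] using nestRepresentable_refl L hΨ (u j)
      · have := nestRepresentable_symm L hΨ (h2 (σ j))
        simpa [hf, not_le.2 h, le_of_lt h, hσσ] using this
    exact ⟨t.realize f, compatible_term hc t e f hf1,
      t'.realize f, ih f hf2, compatible_term hc t' e f hf1⟩
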